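/- (Local solution recovery II, first part.) Suppose there exists a set D ⊆ ℝ^n × ℝ^J_+ (where ℝ^J_+ := {r ∈ ℝ^J : r ≥ 0}) that is dense in ℝ^n × ℝ^J_+ and such that M(x,r) ≠ ∅ for every (x,r) ∈ D. Let (x̄, λ̄) with λ̄ ≥ 0 be an optimal solution of the original bilevel problem locally with respect to x and globally with respect to λ, i.e., x̄ ∈ S_p(λ̄) and there exists ε₀ > 0 such that L(x̄) ≤ L(x) whenever λ ≥ 0, x ∈ S_p(λ), and ‖x − x̄‖ ≤ ε₀. Then (x̄, r̄) with r̄ := P(x̄) is an optimal solution of the reformulated bilevel problem locally with respect to x and globally with respect to r, i.e., x̄ ∈ S_c(r̄) and there exists ε > 0 such that L(x̄) ≤ L(x) whenever r ≥ 0, x ∈ S_c(r), and ‖x − x̄‖ ≤ ε. -/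
import Mathlib


open scoped InnerProductSpace
open Filter Topology

noncomputable section

/-- Euclidean space `ℝ^m`. -/
abbrev Eu (m : ℕ) : Type := EuclideanSpace ℝ (Fin m)

/-- Subgradient set (in the sense of convex analysis) of `f` at `x`. -/
def Subgrad {E : Type*} [NormedAddCommGroup E] [InnerProductSpace ℝ E]
    (f : E → ℝ) (x : E) : Set E :=
  {g | ∀ y, f x + ⟪g, y - x⟫_ℝ ≤ f y}

/-- Feasible region `F(r) = {x : P_i(x) ≤ r_i, i = 1,…,J}`. -/
def Feas {n J : ℕ} (P : Fin J → Eu n → ℝ) (r : Eu J) : Set (Eu n) :=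
  {x | ∀ i, P i x ≤ r i}

/-- `S_p(λ)`: global minimizers of `x' ↦ l(x') + Σ_i λ_i P_i(x')`. -/
def Sp {n J : ℕ} (l : Eu n → ℝ) (P : Fin J → Eu n → ℝ) (lam : Eu J) : Set (Eu n) :=
  {x | ∀ x', l x + ∑ i, lam i * P i x ≤ l x' + ∑ i, lam i * P i x'}

/-- `S_c(r)`: global minimizers of `l` over `F(r)`. -/
def Sc {n J : ℕ} (l : Eu n → ℝ) (P : Fin J → Eu n → ℝ) (r : Eu J) : Set (Eu n) :=
  {x | x ∈ Feas P r ∧ ∀ x' ∈ Feas P r, l x ≤ l x'}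

/-- The multiplier set `M(x,r)`. -/
def Mset {n J : ℕ} (l : Eu n → ℝ) (P : Fin J → Eu n → ℝ) (x : Eu n) (r : Eu J) :
    Set (Eu J) :=
  {lam | (∀ i, 0 ≤ lam i) ∧
    (∃ u ∈ Subgrad l x, ∃ v : Fin J → Eu n,
      (∀ i, v i ∈ Subgrad (P i) x) ∧ u + ∑ i, lam i • v i = 0) ∧
    (∀ i, lam i * (P i x - r i) = 0)}

lemma mem_Sp_of_mem_Mset {n J : ℕ} {l : Eu n → ℝ} {P : Fin J → Eu n → ℝ}
    {x : Eu n} {r : Eu J} {lam : Eu J} (h : lam ∈ Mset l P x r) :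
    x ∈ Sp l P lam := by
  obtain ⟨hnn, ⟨u, hu, v, hv, hsum⟩, _⟩ := h
  intro y
  have h1 := hu y
  have h2 : ∀ i, lam i * P i x + lam i * ⟪v i, y - x⟫_ℝ ≤ lam i * P i y := by
    intro i
    have h3 := hv i y
    nlinarith [hnn i]
  have hz : ⟪u + ∑ i, lam i • v i, y - x⟫_ℝ = 0 := by rw [hsum]; simp
  have hz' : ⟪u, y - x⟫_ℝ + ∑ i, lam i * ⟪v i, y - x⟫_ℝ = 0 := by
    rw [← hz, inner_add_left, sum_inner]
    simp [real_inner_smul_left, Finset.mul_sum, mul_assoc]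
  have hsum2 : ∑ i, (lam i * P i x + lam i * ⟪v i, y - x⟫_ℝ) ≤ ∑ i, lam i * P i y :=
    Finset.sum_le_sum fun i _ => h2 i
  rw [Finset.sum_add_distrib] at hsum2
  linarith

theorem stmt5 {n J : ℕ} (hn : 1 ≤ n) (hJ : 1 ≤ J)
    (l : Eu n → ℝ) (P : Fin J → Eu n → ℝ)
    (hlcv : ConvexOn ℝ Set.univ l) (hlc : Continuous l)
    (hPcv : ∀ i, ConvexOn ℝ Set.univ (P i)) (hPc : ∀ i, Continuous (P i))
    (hPnn : ∀ i x, 0 ≤ P i x)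
    (L : Eu n → ℝ) (hLcv : ConvexOn ℝ Set.univ L) (hLc : Continuous L)
    (D : Set (Eu n × Eu J))
    (hDsub : D ⊆ {p : Eu n × Eu J | ∀ i, 0 ≤ p.2 i})
    (hDdense : {p : Eu n × Eu J | ∀ i, 0 ≤ p.2 i} ⊆ closure D)
    (hDM : ∀ p ∈ D, (Mset l P p.1 p.2).Nonempty)
    (xb : Eu n) (lamb : Eu J) (hlamb : ∀ i, 0 ≤ lamb i)
    (hxb : xb ∈ Sp l P lamb)
    (hloc : ∃ ε₀ > (0 : ℝ), ∀ (x : Eu n) (lam : Eu J), (∀ i, 0 ≤ lam i) →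
      x ∈ Sp l P lam → ‖x - xb‖ ≤ ε₀ → L xb ≤ L x)
    (rb : Eu J) (hrb : ∀ i, rb i = P i xb) :
    xb ∈ Sc l P rb ∧
      ∃ ε > (0 : ℝ), ∀ (x : Eu n) (r : Eu J), (∀ i, 0 ≤ r i) → x ∈ Sc l P r →
        ‖x - xb‖ ≤ ε → L xb ≤ L x := by
  constructor
  · refine ⟨fun i => (hrb i).ge, ?_⟩
    intro x' hx'
    have h := hxb x'
    have hs : ∑ i, lamb i * P i x' ≤ ∑ i, lamb i * P i xb :=
      Finset.sum_le_sum fun i _ =>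
        mul_le_mul_of_nonneg_left ((hx' i).trans (hrb i).le) (hlamb i)
    linarith
  · obtain ⟨ε₀, hε₀, hL⟩ := hloc
    refine ⟨ε₀ / 2, by positivity, ?_⟩
    intro x r hr hx hnear
    refine le_of_forall_pos_le_add ?_
    intro δ hδ
    obtain ⟨η, hη, hcont⟩ := Metric.continuous_iff.mp hLc x δ hδ
    have hp : (x, r) ∈ closure D := hDdense hr
    obtain ⟨q, hqD, hdq⟩ := Metric.mem_closure_iff.mp hp (min η (ε₀ / 2))
      (lt_min hη (by positivity))
    have hd1 : dist x q.1 < min η (ε₀ / 2) :=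
      lt_of_le_of_lt (by rw [Prod.dist_eq]; exact le_max_left _ _) hdq
    obtain ⟨lam, hlam⟩ := hDM q hqD
    have hSp : q.1 ∈ Sp l P lam := mem_Sp_of_mem_Mset hlam
    have hq1 : ‖q.1 - xb‖ ≤ ε₀ := by
      have h1 : ‖q.1 - x‖ < ε₀ / 2 := by
        rw [← dist_eq_norm, dist_comm]
        exact hd1.trans_le (min_le_right _ _)
      calc ‖q.1 - xb‖ ≤ ‖q.1 - x‖ + ‖x - xb‖ := by
            simpa using norm_add_le (q.1 - x) (x - xb)
        _ ≤ ε₀ := by linarith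
    have hLq : L xb ≤ L q.1 := hL q.1 lam hlam.1 hSp hq1
    have hclose : |L q.1 - L x| < δ := by
      have := hcont q.1 (by rw [dist_comm]; exact hd1.trans_le (min_le_left _ _))
      rwa [Real.dist_eq] at this
    have := abs_lt.mp hclose
    linarith
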